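/- Let S = ⟨A ∣ u → v⟩ be a one-rule SRS such that |u| ≤ |v| and u is not a prefix of v. Then M_3 is not embeddable in the reduction graph G_S. -/
import Mathlib


/-- One-step reduction of the one-rule SRS `⟨A ∣ u → v⟩`: `w →_S w'`. -/
def Step {A : Type*} (u v w w' : List A) : Prop :=
  ∃ p q : List A, w = p ++ u ++ q ∧ w' = p ++ v ++ q

/-- One-step reduction of `⟨A ∣ u → v⟩` carried out at position `i`. -/
def StepAt {A : Type*} (u v : List A) (i : ℕ) (w w' : List A) : Prop :=
  ∃ p q : List A, p.length = i ∧ w = p ++ u ++ q ∧ w' = p ++ v ++ q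

/-- The diamond graph `M_k` is embeddable in the reduction graph `G_S` of
`S = ⟨A ∣ u → v⟩`: there are pairwise distinct words `x, y, z_1, …, z_k`
with `x →_S z_i` and `z_i →_S y` for every `i`. -/
def MkEmbeddable {A : Type*} (u v : List A) (k : ℕ) : Prop :=
  ∃ (x y : List A) (z : Fin k → List A),
    Function.Injective z ∧ (∀ i, x ≠ z i) ∧ (∀ i, y ≠ z i) ∧ x ≠ y ∧
    ∀ i, Step u v x (z i) ∧ Step u v (z i) y

/-- Projection from the decorated alphabet `A ⊕ A` (`inl a` = plain letter `a`,
`inr a` = decorated letter `a•`) back to `A`. -/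
def proj {A : Type*} : A ⊕ A → A := Sum.elim id id

/-- One-step reduction of the decorated SRS `S̄` carried out at position `i`:
some word `ū` projecting to `u` is replaced by the fully decorated `v•`. -/
def DecStepAt {A : Type*} (u v : List A) (i : ℕ) (w w' : List (A ⊕ A)) : Prop :=
  ∃ p q ubar : List (A ⊕ A),
    p.length = i ∧ ubar.map proj = u ∧
    w = p ++ ubar ++ q ∧ w' = p ++ v.map Sum.inr ++ q

/-- The leftmost decorated letter of `w` is at position `i`. -/
def FirstDecorated {A : Type*} (w : List (A ⊕ A)) (i : ℕ) : Prop :=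
  (∃ a : A, w[i]? = some (Sum.inr a)) ∧
  ∀ j < i, ∀ a : A, w[j]? ≠ some (Sum.inr a)

/-- The one-rule SRS `⟨A ∣ u → v⟩` is left cancellative:
`u, v` are nonempty and their first letters are distinct. -/
def LeftCancellative {A : Type*} (u v : List A) : Prop :=
  u ≠ [] ∧ v ≠ [] ∧ u.head? ≠ v.head?

/-- `w` is bordered with `T`: `T` is both a prefix and a suffix of `w`. -/
def Bordered {A : Type*} (T w : List A) : Prop :=
  T <+: w ∧ T <:+ w

/-- `T` is self-overlap-free: `OVL(T) = ∅`, i.e. there is no nonempty `w`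
with `T = x ++ w = w ++ y` for nonempty `x, y`. -/
def SelfOverlapFree {A : Type*} (T : List A) : Prop :=
  ∀ w x y : List A, w ≠ [] → x ≠ [] → y ≠ [] → T = x ++ w → T = w ++ y → False

/-- `glue T [R₁, …, R_k] = T R₁ T R₂ ⋯ T R_k T`, the word of `Bord_T` whose
canonical decomposition is `R₁, …, R_k`; thus `φ_T (glue T Rs) = Rs`
(a word of length `Rs.length` over the alphabet `B` of `T`-free words). -/
def glue {A : Type*} (T : List A) : List (List A) → List A
  | [] => T
  | R :: Rs => T ++ R ++ glue T Rs


private lemma get3_left {A : Type*} {p m q : List A} {t : ℕ} (h : t < p.length) :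
    (p ++ m ++ q)[t]? = p[t]? := by
  rw [List.append_assoc, List.getElem?_append_left h]

private lemma get3_mid {A : Type*} {p m q : List A} {t : ℕ} (h1 : p.length ≤ t)
    (h2 : t - p.length < m.length) : (p ++ m ++ q)[t]? = m[t - p.length]? := by
  rw [List.append_assoc, List.getElem?_append_right h1, List.getElem?_append_left h2]

private lemma key_lemma {A : Type*} {u v p q r s : List A} {δ : ℕ}
    (hδu : δ < u.length) (hδv : δ < v.length)
    (H1 : ∀ t < δ, u[t]? = v[t]?) (H2 : u[δ]? ≠ v[δ]?)
    (hz : p ++ v ++ q = r ++ u ++ s) :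
    (∀ t < min p.length r.length + δ, (p ++ u ++ q)[t]? = (r ++ v ++ s)[t]?) ∧
      (p ++ u ++ q)[min p.length r.length + δ]? ≠ (r ++ v ++ s)[min p.length r.length + δ]? := by
  set i := p.length with hi
  set j := r.length with hj
  constructor
  · intro t ht
    rcases lt_or_ge t i with hti | hti <;> rcases lt_or_ge t j with htj | htj
    · have h1 : (p ++ v ++ q)[t]? = p[t]? := get3_left hti
      have h2 : (r ++ u ++ s)[t]? = r[t]? := get3_left htj
      rw [get3_left hti, get3_left htj, ← h1, ← h2, hz]
    · have htj' : t - j < δ := by omega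
      have h1 : (p ++ v ++ q)[t]? = p[t]? := get3_left hti
      have h2 : (r ++ u ++ s)[t]? = u[t - j]? := get3_mid htj (by omega)
      rw [get3_left hti, get3_mid htj (by omega), ← h1, hz, h2, H1 _ htj']
    · have hti' : t - i < δ := by omega
      have h1 : (p ++ v ++ q)[t]? = v[t - i]? := get3_mid hti (by omega)
      have h2 : (r ++ u ++ s)[t]? = r[t]? := get3_left htj
      rw [get3_mid hti (by omega), get3_left htj, ← h2, ← hz, h1, ← H1 _ hti']
    · have hti' : t - i < δ := by omega
      have htj' : t - j < δ := by omega
      have h1 : (p ++ v ++ q)[t]? = v[t - i]? := get3_mid hti (by omega)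
      have h2 : (r ++ u ++ s)[t]? = u[t - j]? := get3_mid htj (by omega)
      have h3 : v[t - i]? = u[t - j]? := by rw [← h1, hz, h2]
      rw [get3_mid hti (by omega), get3_mid htj (by omega),
        H1 _ hti', h3, H1 _ htj']
  · set t := min i j + δ with hT
    rcases le_or_gt i j with hij | hij
    · have hti : i ≤ t := by omega
      have hx : (p ++ u ++ q)[t]? = u[δ]? := by
        rw [get3_mid hti (by omega)]; congr 1; omega
      rcases lt_or_ge t j with htj | htj
      · have h1 : (p ++ v ++ q)[t]? = v[δ]? := by
          rw [get3_mid hti (by omega)]; congr 1; omega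
        have h2 : (r ++ u ++ s)[t]? = r[t]? := get3_left htj
        rw [hx, get3_left htj, ← h2, ← hz, h1]; exact H2
      · have h1 : (p ++ v ++ q)[t]? = v[δ]? := by
          rw [get3_mid hti (by omega)]; congr 1; omega
        have h2 : (r ++ u ++ s)[t]? = u[t - j]? := get3_mid htj (by omega)
        have h3 : u[t - j]? = v[δ]? := by rw [← h2, ← hz, h1]
        have hy : (r ++ v ++ s)[t]? = v[t - j]? := get3_mid htj (by omega)
        rw [hx, hy]
        rcases eq_or_lt_of_le (show t - j ≤ δ by omega) with he | he
        · rw [he]; exact H2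
        · rw [← H1 _ he, h3]; exact H2
    · have htj : j ≤ t := by omega
      have hy : (r ++ v ++ s)[t]? = v[δ]? := by
        rw [get3_mid htj (by omega)]; congr 1; omega
      have h2 : (r ++ u ++ s)[t]? = u[δ]? := by
        rw [get3_mid htj (by omega)]; congr 1; omega
      rcases lt_or_ge t i with hti | hti
      · have h1 : (p ++ v ++ q)[t]? = p[t]? := get3_left hti
        rw [hy, get3_left hti, ← h1, hz, h2]; exact H2
      · have hti' : t - i < δ := by omega
        have h1 : (p ++ v ++ q)[t]? = v[t - i]? := get3_mid hti (by omega)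
        have h3 : v[t - i]? = u[δ]? := by rw [← h1, hz, h2]
        have hx : (p ++ u ++ q)[t]? = u[t - i]? := get3_mid hti (by omega)
        rw [hx, hy, H1 _ hti', h3]; exact H2

private lemma cancel_mid {A : Type*} {p₁ q₁ p₂ q₂ m : List A}
    (h : p₁ ++ m ++ q₁ = p₂ ++ m ++ q₂) (hl : p₁.length = p₂.length) :
    p₁ = p₂ ∧ q₁ = q₂ := by
  have hp : p₁ = p₂ := by
    have := congrArg (List.take p₁.length) h
    rwa [List.append_assoc, List.append_assoc, List.take_left,
      List.take_left' hl.symm] at this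
  subst hp
  exact ⟨rfl, List.append_cancel_left h⟩

private lemma M3_aux {A : Type*} (u v : List A)
    (hlen : u.length ≤ v.length) (hpre : ¬ u <+: v) :
    ¬ (∃ (x y : List A) (z : Fin 3 → List A),
    Function.Injective z ∧ (∀ i, x ≠ z i) ∧ (∀ i, y ≠ z i) ∧ x ≠ y ∧
    ∀ i, (∃ p q : List A, x = p ++ u ++ q ∧ z i = p ++ v ++ q) ∧
      (∃ p q : List A, z i = p ++ u ++ q ∧ y = p ++ v ++ q)) := by
  classical
  rintro ⟨x, y, z, hinj, -, -, -, hstep⟩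
  -- the first index where u and v differ
  have hex : ∃ t : ℕ, u[t]? ≠ v[t]? := by
    by_contra h
    push_neg at h
    have huv : u = v := List.ext_getElem? h
    exact hpre (huv ▸ List.prefix_refl v)
  set δ := Nat.find hex with hδdef
  have H2 : u[δ]? ≠ v[δ]? := Nat.find_spec hex
  have H1 : ∀ t < δ, u[t]? = v[t]? := fun t ht => not_not.mp (Nat.find_min hex ht)
  have hδu : δ < u.length := by
    by_contra h
    push_neg at h
    apply hpre
    have huv : u = v.take u.length := by
      apply List.ext_getElem?
      intro t
      rcases lt_or_ge t u.length with ht | ht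
      · rw [H1 t (lt_of_lt_of_le ht h), List.getElem?_take]
        simp [ht]
      · rw [List.getElem?_eq_none ht, List.getElem?_eq_none (by simpa using by omega)]
    rw [huv]
    exact List.take_prefix _ _
  have hδv : δ < v.length := lt_of_lt_of_le hδu hlen
  -- extract decompositions
  choose p q hxp hzp using fun i : Fin 3 => (hstep i).1
  choose r s hzr hys using fun i : Fin 3 => (hstep i).2
  have hkey := fun i : Fin 3 =>
    key_lemma hδu hδv H1 H2 (p := p i) (q := q i) (r := r i) (s := s i)
      (by rw [← hzp i, hzr i])
  have hmono : ∀ i i' : Fin 3,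
      min (p i).length (r i).length < min (p i').length (r i').length → False := by
    intro i i' hlt
    apply (hkey i).2
    have e1 := (hkey i').1 (min (p i).length (r i).length + δ) (by omega)
    calc (p i ++ u ++ q i)[min (p i).length (r i).length + δ]?
        = (p i' ++ u ++ q i')[min (p i).length (r i).length + δ]? := by
          rw [← hxp i, ← hxp i']
      _ = (r i' ++ v ++ s i')[min (p i).length (r i).length + δ]? := e1
      _ = (r i ++ v ++ s i)[min (p i).length (r i).length + δ]? := by
          rw [← hys i', ← hys i]
  have haeq : ∀ i : Fin 3,
      min (p i).length (r i).length = min (p 0).length (r 0).length := by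
    intro i
    rcases lt_trichotomy (min (p i).length (r i).length)
      (min (p 0).length (r 0).length) with h | h | h
    · exact absurd h fun h => hmono _ _ h
    · exact h
    · exact absurd h fun h => hmono _ _ h
  obtain ⟨i1, i2, hne, hf⟩ := Fintype.exists_ne_map_eq_of_card_lt
    (fun i : Fin 3 => decide ((p i).length = min (p 0).length (r 0).length)) (by simp)
  apply hne
  apply hinj
  rcases Bool.eq_false_or_eq_true
      (decide ((p i1).length = min (p 0).length (r 0).length)) with hb | hb
  · have h1 : (p i1).length = min (p 0).length (r 0).length := of_decide_eq_true hb
    have h2 : (p i2).length = min (p 0).length (r 0).length :=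
      of_decide_eq_true (hf ▸ hb)
    obtain ⟨hpe, hqe⟩ := cancel_mid ((hxp i1).symm.trans (hxp i2)) (h1.trans h2.symm)
    rw [hzp i1, hzp i2, hpe, hqe]
  · have h1 : (p i1).length ≠ min (p 0).length (r 0).length := of_decide_eq_false hb
    have h2 : (p i2).length ≠ min (p 0).length (r 0).length :=
      of_decide_eq_false (hf ▸ hb)
    have hr1 : (r i1).length = min (p 0).length (r 0).length := by
      have := haeq i1; omega
    have hr2 : (r i2).length = min (p 0).length (r 0).length := by
      have := haeq i2; omega
    obtain ⟨hre, hse⟩ := cancel_mid ((hys i1).symm.trans (hys i2)) (hr1.trans hr2.symm)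
    rw [hzr i1, hzr i2, hre, hse]

/-- if `|u| ≤ |v|` and `u` is not a prefix of `v`, then `M_3` is
not embeddable in `G_S`. -/
theorem M3_not_embeddable_of_not_prefix {A : Type*} (u v : List A)
    (hlen : u.length ≤ v.length) (hpre : ¬ u <+: v) :
    ¬ MkEmbeddable u v 3 := by
  exact M3_aux u v hlen hpre
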